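/- The greedy bin-packing algorithm Binpack, which inserts each list of identifiers (each list having length at most p) one identifier at a time into the lowest-indexed non-full bin of capacity p, places every list entirely within at most two consecutive bins: if i is the smallest index of a bin containing an identifier of list L, then all identifiers of L lie in bins i and i+1. -/
import Mathlib


/-- `bin` is a greedy assignment of sequentially inserted items to bins of capacity `p`:
each item goes to the lowest-indexed non-full bin. -/
def IsGreedy (p : ℕ) (bin : ℕ → ℕ) : Prop :=
  ∀ j : ℕ, ((Finset.range j).filter (fun j' => bin j' = bin j)).card < p ∧
    ∀ b < bin j, ((Finset.range j).filter (fun j' => bin j' = b)).card = p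

/-- Binpack places every list (of length `ℓ ≤ p`, inserted as the consecutive items
`s, s+1, …, s+ℓ-1`) entirely within the two consecutive bins `bin s` and `bin s + 1`,
where `bin s` is the smallest index of a bin containing an identifier of the list. -/
theorem binpack_two_consecutive_bins (p : ℕ) (hp : 0 < p) (bin : ℕ → ℕ)
    (hg : IsGreedy p bin) (s ℓ : ℕ) (hℓ : ℓ ≤ p) :
    ∀ j, s ≤ j → j < s + ℓ → bin s ≤ bin j ∧ (bin j = bin s ∨ bin j = bin s + 1) := by
  have mono : ∀ a b : ℕ, a ≤ b → bin a ≤ bin b := by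
    intro a b hab
    by_contra h
    push_neg at h
    have h1 := (hg a).2 (bin b) h
    have h2 := (hg b).1
    have hsub : (Finset.range a).filter (fun j' => bin j' = bin b) ⊆
        (Finset.range b).filter (fun j' => bin j' = bin b) :=
      Finset.filter_subset_filter _ (Finset.range_subset_range.mpr hab)
    have := Finset.card_le_card hsub
    omega
  intro j hsj hjl
  have h1 : bin s ≤ bin j := mono s j hsj
  refine ⟨h1, ?_⟩
  by_contra hne
  push_neg at hne
  have h2 : bin s + 1 < bin j := by omega
  have hA : ((Finset.range j).filter (fun j' => bin j' = bin s)).card = p :=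
    (hg j).2 _ (by omega)
  have hB : ((Finset.range j).filter (fun j' => bin j' = bin s + 1)).card = p :=
    (hg j).2 _ h2
  have hAs : ((Finset.range s).filter (fun j' => bin j' = bin s)).card < p := (hg s).1
  have hun : Finset.range j = Finset.range s ∪ Finset.Ico s j := by
    simp only [Finset.range_eq_Ico]
    exact (Finset.Ico_union_Ico_eq_Ico (Nat.zero_le s) hsj).symm
  have hdisj : Disjoint (Finset.range s) (Finset.Ico s j) := by
    rw [Finset.disjoint_left]
    intro x hx hx'
    simp only [Finset.mem_range, Finset.mem_Ico] at hx hx'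
    omega
  have hsplit : ∀ q : ℕ → Prop, ∀ _ : DecidablePred q,
      ((Finset.range j).filter q).card
        = ((Finset.range s).filter q).card + ((Finset.Ico s j).filter q).card := by
    intro q _
    rw [hun, Finset.filter_union, Finset.card_union_of_disjoint
      (Finset.disjoint_filter_filter hdisj)]
  have hAsplit := hsplit (fun j' => bin j' = bin s) inferInstance
  have hBsplit := hsplit (fun j' => bin j' = bin s + 1) inferInstance
  have hB0 : ((Finset.range s).filter (fun j' => bin j' = bin s + 1)).card = 0 := by
    rw [Finset.card_eq_zero, Finset.filter_eq_empty_iff]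
    intro x hx
    simp only [Finset.mem_range] at hx
    have := mono x s (le_of_lt hx)
    omega
  -- A' and B' in Ico s j are disjoint
  have hdisj2 : Disjoint ((Finset.Ico s j).filter (fun j' => bin j' = bin s))
      ((Finset.Ico s j).filter (fun j' => bin j' = bin s + 1)) := by
    rw [Finset.disjoint_left]
    intro x hx hx'
    simp only [Finset.mem_filter] at hx hx'
    omega
  have hcard : ((Finset.Ico s j).filter (fun j' => bin j' = bin s)).card
      + ((Finset.Ico s j).filter (fun j' => bin j' = bin s + 1)).card
      ≤ (Finset.Ico s j).card := by
    rw [← Finset.card_union_of_disjoint hdisj2]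
    exact Finset.card_le_card (Finset.union_subset (Finset.filter_subset _ _)
      (Finset.filter_subset _ _))
  rw [Nat.card_Ico] at hcard
  omega
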